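/- Let σ be an endomorphism of a prime left noetherian ring R such that σ(R) contains a nonzero two-sided ideal I of R. Then for every n ≥ 1 there exists a nonzero two-sided ideal I_n of R with I_n ⊆ σ^n(R) and I_{n+1} ⊆ σ(I_n); moreover there exists a nonzero ideal J of R such that σ^i(J) is a nonzero ideal of R for all 1 ≤ i ≤ n. -/

import Mathlib

universe u v

/-- The left annihilator of the set `L` in `S` is zero. -/
def LAnnZero (S : Type u) [Ring S] (L : Set S) : Prop :=
  ∀ a : S, (∀ x ∈ L, a * x = 0) → a = 0

/-- The right annihilator of the set `L` in `S` is zero. -/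
def RAnnZero (S : Type u) [Ring S] (L : Set S) : Prop :=
  ∀ a : S, (∀ x ∈ L, x * a = 0) → a = 0

/-- A left ideal is essential: it meets every nonzero left ideal nontrivially. -/
def IsEssentialLeftIdeal {S : Type u} [Ring S] (L : Ideal S) : Prop :=
  ∀ I : Ideal S, I ≠ ⊥ → L ⊓ I ≠ ⊥

/-- A (possibly noncommutative) ring is semiprime: `aRa = 0` implies `a = 0`. -/
def IsSemiprimeRing (S : Type u) [Ring S] : Prop :=
  ∀ a : S, (∀ r : S, a * r * a = 0) → a = 0

/-- A (possibly noncommutative) ring is prime: it is nonzero and `aRb = 0`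
implies `a = 0` or `b = 0`. -/
def IsPrimeRingE (S : Type u) [Ring S] : Prop :=
  Nontrivial S ∧ ∀ a b : S, (∀ r : S, a * r * b = 0) → a = 0 ∨ b = 0

/-- `a` is left regular: its left annihilator is zero. -/
def LeftReg {S : Type u} [Ring S] (a : S) : Prop := ∀ x : S, x * a = 0 → x = 0

/-- `a` is right regular: its right annihilator is zero. -/
def RightReg {S : Type u} [Ring S] (a : S) : Prop := ∀ x : S, a * x = 0 → x = 0

/-- `a` is regular: neither a left nor a right zero divisor. -/
def Reg {S : Type u} [Ring S] (a : S) : Prop := LeftReg a ∧ RightReg a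

/-- A self-map of a ring has large image: its range contains an essential
left ideal with zero right annihilator. -/
def HasLargeImage {S : Type u} [Ring S] (f : S → S) : Prop :=
  ∃ L : Ideal S, IsEssentialLeftIdeal L ∧ RAnnZero S (L : Set S) ∧ (L : Set S) ⊆ Set.range f

/-- The left annihilator of a set, as a left ideal. -/
def lAnnIdeal (S : Type u) [Ring S] (X : Set S) : Ideal S where
  carrier := {a | ∀ x ∈ X, a * x = 0}
  add_mem' := by intro a b ha hb x hx; rw [add_mul, ha x hx, hb x hx, add_zero]
  zero_mem' := by intro x hx; rw [zero_mul]
  smul_mem' := by intro r a ha x hx; simp only [smul_eq_mul, mul_assoc, ha x hx, mul_zero]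

/-- ACC on left annihilator ideals. -/
def AccLeftAnn (S : Type u) [Ring S] : Prop :=
  ∀ X : ℕ → Set S, (∀ n, lAnnIdeal S (X n) ≤ lAnnIdeal S (X (n + 1))) →
    ∃ N, ∀ m, N ≤ m → lAnnIdeal S (X m) = lAnnIdeal S (X N)

/-- Finite uniform (Goldie) dimension on the left: no infinite independent
family of nonzero left ideals. -/
def FinUdim (S : Type u) [Ring S] : Prop :=
  ¬ ∃ f : ℕ → Ideal S, (∀ n, f n ≠ ⊥) ∧ iSupIndep f

/-- Left Goldie ring: ACC on left annihilators and finite left uniform dimension. -/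
def IsLeftGoldie (S : Type u) [Ring S] : Prop := AccLeftAnn S ∧ FinUdim S

/-- The left uniform (Goldie) dimension of `S` is at least `n`. -/
def UdimGE (S : Type u) [Ring S] (n : ℕ) : Prop :=
  ∃ f : Fin n → Ideal S, (∀ i, f i ≠ ⊥) ∧ iSupIndep f

/-- `ι : R →+* Q` realizes `Q` as a classical left quotient ring of `R`:
`ι` is injective, regular elements become units, and every element of `Q`
is a left fraction `(ι s)⁻¹ * (ι a)` with `s` regular. -/
structure IsLeftQuotRing {R : Type u} {Q : Type v} [Ring R] [Ring Q] (ι : R →+* Q) : Prop where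
  inj : Function.Injective ι
  unit : ∀ a : R, Reg a → IsUnit (ι a)
  frac : ∀ q : Q, ∃ a s : R, Reg s ∧ ι s * q = ι a

/-- An ideal (a priori only a left ideal) is two-sided. -/
def IsTwoSided {S : Type u} [Ring S] (I : Ideal S) : Prop := ∀ x ∈ I, ∀ r : S, x * r ∈ I

/-- ACC on two-sided ideals. -/
def AccTwoSided (S : Type u) [Ring S] : Prop :=
  ∀ f : ℕ → Ideal S, (∀ n, IsTwoSided (f n)) → (∀ n, f n ≤ f (n + 1)) →
    ∃ N, ∀ m, N ≤ m → f m = f N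

/-- A trivially ordered set: no strict comparabilities. -/
def TrivOrd (P : Type u) [Preorder P] : Prop := ∀ x y : P, ¬ x < y

/-- `DevLE α P` : the deviation (in the sense of Gabriel–Rentschler) of the
poset `P` is at most `α` (where trivially ordered intervals count as having
deviation `-∞`). -/
def DevLE (α : Ordinal.{v}) (P : Type u) [Preorder P] : Prop :=
  ∀ f : ℕ → P, (∀ n, f (n + 1) ≤ f n) →
    ∃ N : ℕ, ∀ n, N ≤ n →
      TrivOrd ↥(Set.Icc (f (n + 1)) (f n)) ∨
      ∃ β, ∃ _ : β < α, DevLE β ↥(Set.Icc (f (n + 1)) (f n))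
termination_by α

/-- `R` has left Krull dimension in the sense of Gabriel–Rentschler: the
poset of left ideals of `R` has deviation. -/
def HasLeftKrullDim (R : Type u) [Ring R] : Prop :=
  ∃ α : Ordinal.{u}, DevLE α (Ideal R)

/-- `(A, ι, τ)` is a Cohn–Jordan extension of `(R, σ)`: `ι : R → A` is an
injective embedding, the automorphism `τ` of `A` extends `σ`, and every
element of `A` is mapped into `R` by some positive power of `τ`. -/
structure IsCohnJordan {R A : Type u} [Ring R] [Ring A] (σ : R →+* R) (ι : R →+* A)
    (τ : A ≃+* A) : Prop where
  inj : Function.Injective ι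
  comm : ∀ r : R, τ (ι r) = ι (σ r)
  small : ∀ a : A, ∃ n : ℕ, 1 ≤ n ∧ (⇑τ)^[n] a ∈ Set.range ι


section Stmt18Aux

namespace Stmt18Aux

variable {R : Type u} [Ring R]

/-- Membership in a left-annihilator ideal of a singleton. -/
lemma mem_lAnn_singleton {a z : R} : z ∈ lAnnIdeal R {a} ↔ z * a = 0 := by
  constructor
  · intro h; exact h a rfl
  · intro h x hx
    rw [Set.mem_singleton_iff] at hx
    rw [hx]; exact h

lemma prime_elem (hp : IsPrimeRingE R) {x y : R} (hx : x ≠ 0) (hy : y ≠ 0) :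
    ∃ r : R, x * r * y ≠ 0 := by
  by_contra h
  push_neg at h
  rcases hp.2 x y h with h' | h'
  · exact hx h'
  · exact hy h'

lemma left_pad (hp : IsPrimeRingE R) {I : Ideal R} (hI2 : IsTwoSided I) (hIne : I ≠ ⊥)
    {x : R} (hx : x ≠ 0) : ∃ a ∈ I, a * x ≠ 0 := by
  obtain ⟨a₀, ha₀I, ha₀⟩ := (Submodule.ne_bot_iff I).mp hIne
  obtain ⟨r, hr⟩ := prime_elem hp ha₀ hx
  exact ⟨a₀ * r, hI2 a₀ ha₀I r, hr⟩

lemma right_pad (hp : IsPrimeRingE R) {I : Ideal R} (hIne : I ≠ ⊥)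
    {x : R} (hx : x ≠ 0) : ∃ b ∈ I, x * b ≠ 0 := by
  obtain ⟨b₀, hb₀I, hb₀⟩ := (Submodule.ne_bot_iff I).mp hIne
  obtain ⟨r, hr⟩ := prime_elem hp hx hb₀
  refine ⟨r * b₀, Ideal.mul_mem_left I r hb₀I, ?_⟩
  rwa [← mul_assoc]

lemma pad_both (hp : IsPrimeRingE R) {I : Ideal R} (hI2 : IsTwoSided I) (hIne : I ≠ ⊥)
    {x : R} (hx : x ≠ 0) : ∃ a ∈ I, ∃ b ∈ I, a * (x * b) ≠ 0 := by
  obtain ⟨b, hbI, hb⟩ := right_pad hp hIne hx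
  obtain ⟨a, haI, ha⟩ := left_pad hp hI2 hIne hb
  exact ⟨a, haI, b, hbI, ha⟩

lemma pow_swap (x r : R) : ∀ m : ℕ, (x * r) ^ (m + 1) = x * ((r * x) ^ m * r)
  | 0 => by simp
  | (m + 1) => by
    rw [pow_succ (x * r) (m + 1), pow_swap x r m, pow_succ (r * x) m]
    noncomm_ring

/-- In a prime left noetherian ring, a left ideal all of whose elements are
nilpotent is zero (Levitzki-type lemma). -/
lemma no_nil_ideal (hp : IsPrimeRingE R) [IsNoetherianRing R] (W : Ideal R)
    (hW : ∀ x ∈ W, IsNilpotent x) : W = ⊥ := by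
  haveI : Nontrivial R := hp.1
  by_contra hbot
  obtain ⟨x₀, hx₀W, hx₀⟩ := (Submodule.ne_bot_iff W).mp hbot
  have hx₀nil : ∀ r : R, IsNilpotent (x₀ * r) := by
    intro r
    obtain ⟨m, hm⟩ := hW (r * x₀) (Ideal.mul_mem_left W r hx₀W)
    exact ⟨m + 1, by rw [pow_swap, hm, zero_mul, mul_zero]⟩
  classical
  set A : Set (Ideal R) :=
    {J | ∃ a : R, a ≠ 0 ∧ (∀ r : R, IsNilpotent (a * r)) ∧ J = lAnnIdeal R {a}} with hA
  obtain ⟨M, hMA, hmax⟩ :=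
    (set_has_maximal_iff_noetherian.mpr inferInstance) A ⟨_, x₀, hx₀, hx₀nil, rfl⟩
  obtain ⟨a, ha0, hanil, rfl⟩ := hMA
  have key : ∀ r : R, a * r * a = 0 := by
    intro r
    by_cases h : a * r = 0
    · rw [h, zero_mul]
    · have hpred : ∃ k, (a * r) ^ k = 0 := hanil r
      have hk : (a * r) ^ Nat.find hpred = 0 := Nat.find_spec hpred
      have hk0 : (a * r) ^ 0 ≠ 0 := by simpa using (one_ne_zero : (1 : R) ≠ 0)
      have hk1 : (a * r) ^ 1 ≠ 0 := by simpa using h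
      have h2 : 2 ≤ Nat.find hpred := by
        by_contra hlt
        push_neg at hlt
        have : Nat.find hpred = 0 ∨ Nat.find hpred = 1 := by omega
        rcases this with h0 | h0 <;> rw [h0] at hk
        · exact hk0 hk
        · exact hk1 hk
      obtain ⟨j, hj⟩ : ∃ j, Nat.find hpred = j + 2 := ⟨Nat.find hpred - 2, by omega⟩
      have hbne : (a * r) ^ (j + 1) ≠ 0 := Nat.find_min hpred (by omega)
      have hbform : (a * r) ^ (j + 1) = a * (r * (a * r) ^ j) := by
        rw [pow_succ' (a * r) j, mul_assoc]
      have hbnil : ∀ s : R, IsNilpotent ((a * r) ^ (j + 1) * s) := by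
        intro s
        rw [hbform, mul_assoc]
        exact hanil _
      have hle : lAnnIdeal R {a} ≤ lAnnIdeal R {(a * r) ^ (j + 1)} := by
        intro z hz
        rw [mem_lAnn_singleton] at hz ⊢
        rw [hbform, ← mul_assoc, hz, zero_mul]
      have heq : lAnnIdeal R {a} = lAnnIdeal R {(a * r) ^ (j + 1)} := by
        by_contra hne
        exact hmax _ ⟨(a * r) ^ (j + 1), hbne, hbnil, rfl⟩ (lt_of_le_of_ne hle hne)
      have har : a * r ∈ lAnnIdeal R {(a * r) ^ (j + 1)} := by
        rw [mem_lAnn_singleton, ← pow_succ' (a * r) (j + 1)]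
        rw [show j + 1 + 1 = j + 2 from rfl, ← hj]
        exact hk
      rw [← heq, mem_lAnn_singleton] at har
      exact har
  rcases hp.2 a a key with h | h <;> exact ha0 h

/-- Fitting-type lemma: a non-nilpotent element has a nonzero power `d` with
`lAnn(d²) = lAnn(d)`. -/
lemma fitting [IsNoetherianRing R] {u : R} (hu : ¬ IsNilpotent u) :
    ∃ d : R, d ≠ 0 ∧ (∃ m : ℕ, 1 ≤ m ∧ d = u ^ m) ∧
      (∀ z : R, z * (d * d) = 0 → z * d = 0) := by
  have mono : Monotone fun m : ℕ => lAnnIdeal R {u ^ m} := by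
    apply monotone_nat_of_le_succ
    intro m z hz
    rw [mem_lAnn_singleton] at hz ⊢
    rw [pow_succ, ← mul_assoc, hz, zero_mul]
  obtain ⟨N, hN⟩ := monotone_stabilizes_iff_noetherian.mpr inferInstance ⟨_, mono⟩
  refine ⟨u ^ (N + 1), fun h => hu ⟨N + 1, h⟩, ⟨N + 1, by omega, rfl⟩, ?_⟩
  intro z hz
  have hmem : z ∈ lAnnIdeal R {u ^ (N + 1 + (N + 1))} := by
    rw [mem_lAnn_singleton, pow_add]
    rwa [← mul_assoc] at hz ⊢
  have e1 : lAnnIdeal R {u ^ (N + 1)} = lAnnIdeal R {u ^ (N + 1 + (N + 1))} :=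
    (hN (N + 1) (by omega)).symm.trans (hN (N + 1 + (N + 1)) (by omega))
  rw [← e1, mem_lAnn_singleton] at hmem
  exact hmem

/-- Goldie-type lemma: in a prime left noetherian ring, every nonzero two-sided
ideal contains a left-regular element. -/
theorem exists_lreg (hp : IsPrimeRingE R) [IsNoetherianRing R]
    {I : Ideal R} (hI2 : IsTwoSided I) (hIne : I ≠ ⊥) :
    ∃ c ∈ I, ∀ z : R, z * c = 0 → z = 0 := by
  classical
  set A : Set (Ideal R) :=
    {S | ∃ c : R, c ∈ I ∧ (∀ z : R, z * (c * c) = 0 → z * c = 0) ∧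
      (∀ w ∈ S, w * c = 0 → w = 0)} with hAdef
  have hA : A.Nonempty := by
    refine ⟨⊥, 0, I.zero_mem, fun z _ => mul_zero z, fun w hw _ => ?_⟩
    simpa using hw
  obtain ⟨S, hSA, hmax⟩ := (set_has_maximal_iff_noetherian.mpr inferInstance) A hA
  obtain ⟨c, hcI, hcf, hS⟩ := hSA
  by_cases hreg : ∀ z : R, z * c = 0 → z = 0
  · exact ⟨c, hcI, hreg⟩
  exfalso
  push_neg at hreg
  obtain ⟨z, hzc, hzne⟩ := hreg
  obtain ⟨a, haI, haz⟩ := left_pad hp hI2 hIne hzne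
  have hazc : (a * z) * c = 0 := by rw [mul_assoc, hzc, mul_zero]
  have hazI : a * z ∈ I := hI2 a haI z
  set W : Ideal R := lAnnIdeal R {c} ⊓ I with hWdef
  have hazW : a * z ∈ W := Submodule.mem_inf.mpr ⟨mem_lAnn_singleton.mpr hazc, hazI⟩
  have hWne : W ≠ ⊥ := (Submodule.ne_bot_iff W).mpr ⟨a * z, hazW, haz⟩
  have hnotnil : ¬ ∀ x ∈ W, IsNilpotent x := fun h => hWne (no_nil_ideal hp W h)
  push_neg at hnotnil
  obtain ⟨u, huW, hunil⟩ := hnotnil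
  obtain ⟨d, hd0, ⟨m, hm1, hdm⟩, hdf⟩ := fitting hunil
  have hdW : d ∈ W := by
    obtain ⟨m', hm'⟩ : ∃ m', m = m' + 1 := ⟨m - 1, by omega⟩
    rw [hdm, hm', pow_succ]
    exact Ideal.mul_mem_left W _ huW
  have hdc : d * c = 0 := mem_lAnn_singleton.mp (Submodule.mem_inf.mp hdW).1
  have hdI : d ∈ I := (Submodule.mem_inf.mp hdW).2
  have hcI' : c + d ∈ I := I.add_mem hcI hdI
  have hsplit : ∀ y : R, y * (c + d) = 0 → y * c = 0 ∧ y * d = 0 := by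
    intro y hy
    have h1 : y * c + y * d = 0 := by rw [← mul_add]; exact hy
    have h2 : (y * c) * c = 0 := by
      have h := congrArg (· * c) h1
      simp only [add_mul, zero_mul] at h
      rwa [mul_assoc y d c, hdc, mul_zero, add_zero] at h
    have h3 : y * c = 0 := hcf y (by rwa [mul_assoc] at h2)
    exact ⟨h3, by rwa [h3, zero_add] at h1⟩
  have hcf' : ∀ y : R, y * ((c + d) * (c + d)) = 0 → y * (c + d) = 0 := by
    intro y hy
    have hexp : (c + d) * (c + d) = c * c + c * d + d * d := by
      have : (c + d) * (c + d) = c * c + c * d + (d * c + d * d) := by noncomm_ring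
      rw [this, hdc, zero_add]
    have e1 : ((c + d) * (c + d)) * c = (c * c) * c := by
      rw [hexp, add_mul, add_mul, mul_assoc c d c, hdc, mul_zero, mul_assoc d d c, hdc,
        mul_zero, add_zero, add_zero]
    have e2 : (y * c) * (c * c) = 0 := by
      have h := congrArg (· * c) hy
      simp only [zero_mul] at h
      rw [mul_assoc, e1] at h
      calc (y * c) * (c * c) = y * (c * (c * c)) := by rw [mul_assoc]
        _ = y * ((c * c) * c) := by rw [mul_assoc]
        _ = 0 := h
    have e3 : (y * c) * c = 0 := hcf (y * c) e2
    have e4 : y * c = 0 := hcf y (by rwa [mul_assoc] at e3)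
    have e5 : y * (d * d) = 0 := by
      have h : y * (c * c) + y * (c * d) + y * (d * d) = 0 := by
        rw [← mul_add, ← mul_add, ← hexp]; exact hy
      rwa [← mul_assoc y c c, ← mul_assoc y c d, e4, zero_mul, zero_mul, zero_add,
        zero_add] at h
    have e6 : y * d = 0 := hdf y e5
    rw [mul_add, e4, e6, add_zero]
  have hdS' : d ∈ S ⊔ Ideal.span {d} :=
    (le_sup_right : Ideal.span {d} ≤ S ⊔ Ideal.span {d}) (Ideal.subset_span rfl)
  have hdnotS : d ∉ S := fun hdS => hd0 (hS d hdS hdc)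
  have hSlt : S < S ⊔ Ideal.span {d} :=
    lt_of_le_of_ne le_sup_left (fun h => hdnotS (h ▸ hdS'))
  refine hmax (S ⊔ Ideal.span {d}) ⟨c + d, hcI', hcf', ?_⟩ hSlt
  intro w hwS' hwc'
  obtain ⟨s, hs, t, ht, rfl⟩ := Submodule.mem_sup.mp hwS'
  obtain ⟨r, rfl⟩ := Submodule.mem_span_singleton.mp ht
  obtain ⟨hwc, hwd⟩ := hsplit _ hwc'
  have hsc : s * c = 0 := by
    have h := hwc
    rwa [add_mul, smul_eq_mul, mul_assoc, hdc, mul_zero, add_zero] at h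
  have hs0 : s = 0 := hS s hs hsc
  have hrd : r * d = 0 := by
    apply hdf
    have h := hwd
    rwa [hs0, zero_add, smul_eq_mul, mul_assoc] at h
  rw [hs0, zero_add, smul_eq_mul, hrd]

/-- The image of a left ideal under right multiplication by `c`. -/
def mulcId (c : R) (L : Ideal R) : Ideal R where
  carrier := {y | ∃ x ∈ L, x * c = y}
  add_mem' := by
    rintro y₁ y₂ ⟨x₁, hx₁, rfl⟩ ⟨x₂, hx₂, rfl⟩
    exact ⟨x₁ + x₂, L.add_mem hx₁ hx₂, add_mul x₁ x₂ c⟩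
  zero_mem' := ⟨0, L.zero_mem, zero_mul c⟩
  smul_mem' := by
    rintro r y ⟨x, hx, rfl⟩
    exact ⟨r * x, Ideal.mul_mem_left L r hx, by rw [smul_eq_mul, mul_assoc]⟩

lemma mem_mulcId {c : R} {L : Ideal R} {y : R} :
    y ∈ mulcId c L ↔ ∃ x ∈ L, x * c = y := Iff.rfl

/-- Key injectivity theorem: an endomorphism of a prime left noetherian ring
whose image contains a nonzero two-sided ideal is injective. -/
theorem sigma_inj (hp : IsPrimeRingE R) [IsNoetherianRing R] (σ : R →+* R)
    {I : Ideal R} (hI2 : IsTwoSided I) (hIne : I ≠ ⊥)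
    (hIr : (I : Set R) ⊆ Set.range σ) : Function.Injective σ := by
  obtain ⟨c, hcI, hreg⟩ := exists_lreg hp hI2 hIne
  refine (injective_iff_map_eq_zero σ).mpr ?_
  intro k hk
  by_contra hkne
  set Φ : Ideal R → Ideal R := fun L => Ideal.comap σ (mulcId c L) with hΦ
  have hmono : Monotone Φ := by
    intro L L' h y hy
    rw [hΦ, Ideal.mem_comap, mem_mulcId] at hy ⊢
    obtain ⟨x, hx, hxc⟩ := hy
    exact ⟨x, h hx, hxc⟩
  have hstrict : ∀ L L' : Ideal R, L < L' → Φ L < Φ L' := by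
    intro L L' h
    refine lt_of_le_of_ne (hmono h.le) (fun heq => h.not_ge ?_)
    intro x hx
    have hxcI : x * c ∈ I := Ideal.mul_mem_left I x hcI
    obtain ⟨w, hw⟩ := hIr hxcI
    have hwmem : w ∈ Φ L' := by
      rw [hΦ, Ideal.mem_comap, mem_mulcId]
      exact ⟨x, hx, hw.symm⟩
    rw [← heq, hΦ, Ideal.mem_comap, mem_mulcId] at hwmem
    obtain ⟨x', hx', hx'c⟩ := hwmem
    have h0 : (x - x') * c = 0 := by rw [sub_mul, hx'c, hw, sub_self]
    have hxx' : x = x' := sub_eq_zero.mp (hreg _ h0)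
    rw [hxx']; exact hx'
  set B : ℕ → Ideal R := fun n => Nat.rec (motive := fun _ => Ideal R) ⊥ (fun _ ih => Φ ih) n with hB
  have hstep : ∀ n, B n < B (n + 1) := by
    intro n
    induction n with
    | zero =>
      have hkmem : k ∈ B 1 := by
        show σ k ∈ mulcId c ⊥
        rw [hk, mem_mulcId]
        exact ⟨0, Submodule.zero_mem ⊥, zero_mul c⟩
      exact bot_lt_iff_ne_bot.mpr ((Submodule.ne_bot_iff _).mpr ⟨k, hkmem, hkne⟩)
    | succ n ih => exact hstrict _ _ ih
  have hmonoB : Monotone B := monotone_nat_of_le_succ (fun n => (hstep n).le)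
  obtain ⟨N, hN⟩ := monotone_stabilizes_iff_noetherian.mpr inferInstance ⟨B, hmonoB⟩
  exact (hstep N).ne (hN (N + 1) (by omega))

end Stmt18Aux

end Stmt18Aux

section Stmt18Main

namespace Stmt18Aux

variable {R : Type u} [Ring R]

/-- The pattern set `I · σ(B) · I`. -/
def patSet (σ : R →+* R) (I B : Ideal R) : Set R :=
  {y | ∃ a ∈ I, ∃ x ∈ B, ∃ b ∈ I, a * σ x * b = y}

/-- The two-sided ideal generated by `I · σ(B) · I` (already additively spanned). -/
def patI (σ : R →+* R) (I B : Ideal R) : Ideal R where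
  carrier := (AddSubmonoid.closure (patSet σ I B) : Set R)
  add_mem' := fun h1 h2 => AddSubmonoid.add_mem _ h1 h2
  zero_mem' := AddSubmonoid.zero_mem _
  smul_mem' := by
    intro r y hy
    simp only [smul_eq_mul, SetLike.mem_coe] at hy ⊢
    induction hy using AddSubmonoid.closure_induction with
    | mem x hx =>
      obtain ⟨a, ha, w, hw, b, hb, rfl⟩ := hx
      refine AddSubmonoid.subset_closure ⟨r * a, Ideal.mul_mem_left I r ha, w, hw, b, hb, ?_⟩
      rw [← mul_assoc, ← mul_assoc]
    | zero => rw [mul_zero]; exact AddSubmonoid.zero_mem _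
    | add x y' hx hy' ihx ihy => rw [mul_add]; exact AddSubmonoid.add_mem _ ihx ihy

lemma mem_patI {σ : R →+* R} {I B : Ideal R} {y : R} :
    y ∈ patI σ I B ↔ y ∈ AddSubmonoid.closure (patSet σ I B) := Iff.rfl

lemma patI_twoSided (σ : R →+* R) (I B : Ideal R) (hI2 : IsTwoSided I) :
    IsTwoSided (patI σ I B) := by
  intro y hy t
  rw [mem_patI] at hy ⊢
  induction hy using AddSubmonoid.closure_induction with
  | mem x hx =>
    obtain ⟨a, ha, w, hw, b, hb, rfl⟩ := hx
    refine AddSubmonoid.subset_closure ⟨a, ha, w, hw, b * t, hI2 b hb t, ?_⟩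
    rw [mul_assoc (a * σ w) b t]
  | zero => rw [zero_mul]; exact AddSubmonoid.zero_mem _
  | add x y' hx hy' ihx ihy => rw [add_mul]; exact AddSubmonoid.add_mem _ ihx ihy

lemma patI_sub (σ : R →+* R) (I B : Ideal R) (hB2 : IsTwoSided B)
    (hIr : (I : Set R) ⊆ Set.range σ) :
    (patI σ I B : Set R) ⊆ ⇑σ '' (B : Set R) := by
  intro y hy
  have hle : AddSubmonoid.closure (patSet σ I B) ≤
      AddSubmonoid.map (AddMonoidHom.mk' σ (map_add σ)) B.toAddSubmonoid := by
    apply AddSubmonoid.closure_le.mpr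
    rintro y ⟨a, ha, w, hw, b, hb, rfl⟩
    obtain ⟨a1, rfl⟩ := hIr ha
    obtain ⟨b1, rfl⟩ := hIr hb
    refine AddSubmonoid.mem_map.mpr ⟨a1 * w * b1, ?_, ?_⟩
    · exact (Submodule.mem_toAddSubmonoid B _).mpr (hB2 _ (Ideal.mul_mem_left B a1 hw) b1)
    · simp [map_mul]
  obtain ⟨w, hwB, hwy⟩ := AddSubmonoid.mem_map.mp (hle hy)
  exact ⟨w, (Submodule.mem_toAddSubmonoid B _).mp hwB, hwy⟩

lemma patI_ne (hp : IsPrimeRingE R) (σ : R →+* R) (hinj : Function.Injective σ)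
    {I B : Ideal R} (hI2 : IsTwoSided I) (hIne : I ≠ ⊥) (hBne : B ≠ ⊥) :
    patI σ I B ≠ ⊥ := by
  obtain ⟨x₀, hx₀B, hx₀⟩ := (Submodule.ne_bot_iff B).mp hBne
  have hσx₀ : σ x₀ ≠ 0 := fun h => hx₀ (hinj (by rw [h, map_zero]))
  obtain ⟨a, haI, b, hbI, hab⟩ := pad_both hp hI2 hIne hσx₀
  refine (Submodule.ne_bot_iff _).mpr ⟨a * σ x₀ * b, ?_, by rw [mul_assoc]; exact hab⟩
  exact AddSubmonoid.subset_closure ⟨a, haI, x₀, hx₀B, b, hbI, rfl⟩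

lemma patI_range (σ : R →+* R) (I B : Ideal R) (hB2 : IsTwoSided B)
    (hIr : (I : Set R) ⊆ Set.range σ) {n : ℕ}
    (hBr : (B : Set R) ⊆ Set.range (⇑σ)^[n]) :
    (patI σ I B : Set R) ⊆ Set.range (⇑σ)^[n + 1] := by
  intro y hy
  obtain ⟨x, hxB, rfl⟩ := patI_sub σ I B hB2 hIr hy
  obtain ⟨w, rfl⟩ := hBr hxB
  exact ⟨w, Function.iterate_succ_apply' σ n w⟩

lemma comap_twoSided (f : R →+* R) {B : Ideal R} (hB2 : IsTwoSided B) :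
    IsTwoSided (Ideal.comap f B) := by
  intro x hx r
  rw [Ideal.mem_comap] at hx ⊢
  rw [map_mul]
  exact hB2 _ hx _

lemma comap_pow_ne (σ : R →+* R) {B : Ideal R} {n m : ℕ} (hm : m ≤ n) (hBne : B ≠ ⊥)
    (hBr : (B : Set R) ⊆ Set.range (⇑σ)^[n]) : Ideal.comap (σ ^ m) B ≠ ⊥ := by
  obtain ⟨y₀, hy₀B, hy₀⟩ := (Submodule.ne_bot_iff B).mp hBne
  obtain ⟨w, hw⟩ := hBr hy₀B
  have hx : (⇑σ)^[m] ((⇑σ)^[n - m] w) = y₀ := by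
    rw [← Function.iterate_add_apply, show m + (n - m) = n by omega]
    exact hw
  refine (Submodule.ne_bot_iff _).mpr ⟨(⇑σ)^[n - m] w, ?_, ?_⟩
  · rw [Ideal.mem_comap]
    show (⇑(σ ^ m)) ((⇑σ)^[n - m] w) ∈ B
    rw [RingHom.coe_pow, hx]
    exact hy₀B
  · intro h0
    apply hy₀
    rw [← hx, h0]
    show (⇑(σ ^ m)) 0 = 0
    exact map_zero _

end Stmt18Aux

end Stmt18Main

theorem stmt18 {R : Type u} [Ring R] (hprime : IsPrimeRingE R) [IsNoetherianRing R]
    (σ : R →+* R) (I : Ideal R) (hI2 : IsTwoSided I) (hI : I ≠ ⊥)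
    (hIr : (I : Set R) ⊆ Set.range σ) :
    (∃ J : ℕ → Ideal R, ∀ n : ℕ, 1 ≤ n →
      IsTwoSided (J n) ∧ J n ≠ ⊥ ∧ ((J n : Set R) ⊆ Set.range (⇑σ)^[n]) ∧
        ((J (n + 1) : Set R) ⊆ ⇑σ '' (J n : Set R))) ∧
    (∀ n : ℕ, 1 ≤ n → ∃ J : Ideal R, IsTwoSided J ∧ J ≠ ⊥ ∧
      ∀ i : ℕ, 1 ≤ i → i ≤ n → ∃ K : Ideal R, IsTwoSided K ∧ K ≠ ⊥ ∧
        (K : Set R) = (⇑σ)^[i] '' (J : Set R)) := by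
  classical
  have hinj : Function.Injective σ := Stmt18Aux.sigma_inj hprime σ hI2 hI hIr
  -- the tower of two-sided ideals
  set Jc : ℕ → Ideal R := fun n => Nat.rec (motive := fun _ => Ideal R) I (fun _ ih => Stmt18Aux.patI σ I ih) n with hJc
  have hJsucc : ∀ n, Jc (n + 1) = Stmt18Aux.patI σ I (Jc n) := fun n => rfl
  have pack : ∀ n : ℕ, IsTwoSided (Jc n) ∧ Jc n ≠ ⊥ ∧
      ((Jc n : Set R) ⊆ Set.range (⇑σ)^[n]) := by
    intro n
    induction n with
    | zero =>
      refine ⟨hI2, hI, ?_⟩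
      intro x _
      exact ⟨x, rfl⟩
    | succ n ih =>
      obtain ⟨ih2, ihne, ihr⟩ := ih
      refine ⟨?_, ?_, ?_⟩
      · rw [hJsucc]; exact Stmt18Aux.patI_twoSided σ I (Jc n) hI2
      · rw [hJsucc]; exact Stmt18Aux.patI_ne hprime σ hinj hI2 hI ihne
      · rw [hJsucc]; exact Stmt18Aux.patI_range σ I (Jc n) ih2 hIr ihr
  constructor
  · refine ⟨Jc, fun n _ => ⟨(pack n).1, (pack n).2.1, (pack n).2.2, ?_⟩⟩
    rw [hJsucc]
    exact Stmt18Aux.patI_sub σ I (Jc n) (pack n).1 hIr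
  · intro n hn
    obtain ⟨hB2, hBne, hBr⟩ := pack n
    refine ⟨Ideal.comap (σ ^ n) (Jc n), Stmt18Aux.comap_twoSided _ hB2,
      Stmt18Aux.comap_pow_ne σ le_rfl hBne hBr, ?_⟩
    have key : ∀ i : ℕ, i ≤ n →
        (⇑σ)^[i] '' ((Ideal.comap (σ ^ n) (Jc n) : Ideal R) : Set R) =
          ((Ideal.comap (σ ^ (n - i)) (Jc n) : Ideal R) : Set R) := by
      intro i
      induction i with
      | zero =>
        intro _
        simp
      | succ j ihj =>
        intro hj
        have hj' : j ≤ n := by omega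
        rw [Function.iterate_succ', Set.image_comp, ihj hj']
        have hmem : ∀ x : R, x ∈ Ideal.comap (σ ^ (n - j)) (Jc n) ↔
            (⇑σ)^[n - j] x ∈ Jc n := by
          intro x
          rw [Ideal.mem_comap]
          constructor
          · intro h; rwa [← RingHom.coe_pow]
          · intro h; rwa [RingHom.coe_pow]
        have hmem' : ∀ x : R, x ∈ Ideal.comap (σ ^ (n - (j + 1))) (Jc n) ↔
            (⇑σ)^[n - (j + 1)] x ∈ Jc n := by
          intro x
          rw [Ideal.mem_comap]
          constructor
          · intro h; rwa [← RingHom.coe_pow]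
          · intro h; rwa [RingHom.coe_pow]
        ext y
        constructor
        · rintro ⟨x, hx, rfl⟩
          rw [SetLike.mem_coe] at hx ⊢
          rw [hmem']
          rw [← Function.iterate_succ_apply, show (n - (j + 1)).succ = n - j by omega]
          exact (hmem x).mp hx
        · intro hy
          rw [SetLike.mem_coe, hmem'] at hy
          obtain ⟨w, hw⟩ := hBr hy
          have hyw : (⇑σ)^[j + 1] w = y := by
            apply hinj.iterate (n - (j + 1))
            rw [← Function.iterate_add_apply, show n - (j + 1) + (j + 1) = n by omega, hw]
          refine ⟨(⇑σ)^[j] w, ?_, ?_⟩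
          · rw [SetLike.mem_coe, hmem, ← Function.iterate_add_apply,
              show n - j + j = n by omega, hw]
            exact hy
          · exact (Function.iterate_succ_apply' (⇑σ) j w).symm.trans hyw
    intro i hi1 hin
    exact ⟨Ideal.comap (σ ^ (n - i)) (Jc n), Stmt18Aux.comap_twoSided _ hB2,
      Stmt18Aux.comap_pow_ne σ (by omega) hBne hBr, (key i hin).symm⟩
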